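/- Let X be a finite set, ν a probability measure on X with ν({x}) > 0 for all x, B₁, …, B_m a partition of X, f : X → (0, ∞), and R the kernel R_x(·) = f(x)·ν(· | B_j) for x ∈ B_j. Assume moreover that ν(f = a | B_j) = ν(f = a) for every j and every a > 0. Let (Xₙ) be the MVPS(θ, ν, R). Then for every n and every measurable A ⊆ X, f(X_{n+1}) given (X₁,…,Xₙ) has distribution equal to the ν-law of f, and f(X_{n+1}) is conditionally independent of the event {X_{n+1} ∈ B_j} given (X₁,…,Xₙ), for each j. -/

import Mathlib

open MeasureTheory Finset


lemma aux_integrable {Ω α : Type*} [MeasurableSpace Ω] (P : Measure Ω) [IsFiniteMeasure P]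
    [Fintype α] [MeasurableSpace α] [MeasurableSingletonClass α]
    {g : Ω → α} (hg : Measurable g) (H : α → ℝ) :
    Integrable (fun ω => H (g ω)) P := by
  have : (fun ω => H (g ω))
      = fun ω => ∑ p : α, Set.indicator (g ⁻¹' {p}) (fun _ => H p) ω := by
    funext ω
    rw [Finset.sum_eq_single (g ω)]
    · simp [Set.indicator_apply]
    · intro p _ hp
      exact Set.indicator_of_notMem (fun h => hp (Set.mem_singleton_iff.mp h).symm) (fun _ => H p)
    · simp
  rw [this]
  exact integrable_finset_sum _ fun p _ =>
    (integrable_const _).indicator (hg (measurableSet_singleton p))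

lemma key_condexp {Ω X : Type*} [MeasurableSpace Ω] [Fintype X] [DecidableEq X]
    [MeasurableSpace X] [MeasurableSingletonClass X]
    (P : Measure Ω) [IsProbabilityMeasure P]
    (ν f : X → ℝ) (θ : ℝ) (hθ : 0 < θ) (hf : ∀ x, 0 < f x) (R : X → X → ℝ)
    (Xseq : ℕ → Ω → X) (hXmeas : ∀ k, Measurable (Xseq k))
    (n : ℕ)
    (hpred : ∀ x : X, ∀ S : Set (Fin n → X), MeasurableSet S →
      ∫ ω, Set.indicator {x} (fun _ => (1 : ℝ)) (Xseq n ω) *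
          Set.indicator S (fun _ => (1 : ℝ)) (fun i : Fin n => Xseq i ω) ∂P
        = ∫ ω, ((θ * ν x + ∑ i ∈ range n, R (Xseq i ω) x) /
              (θ + ∑ i ∈ range n, f (Xseq i ω))) *
            Set.indicator S (fun _ => (1 : ℝ)) (fun i : Fin n => Xseq i ω) ∂P)
    (A : Finset X) (G : (Fin n → X) → ℝ)
    (hG : ∀ p : Fin n → X,
      ∑ x ∈ A, (θ * ν x + ∑ i : Fin n, R (p i) x) = G p * (θ + ∑ i : Fin n, f (p i))) :
    (P[(fun ω => if Xseq n ω ∈ A then (1:ℝ) else 0) |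
        MeasurableSpace.comap (fun ω (i : Fin n) => Xseq i ω) inferInstance])
      =ᵐ[P] fun ω => G (fun i : Fin n => Xseq i ω) := by
  have hpstm : Measurable (fun ω (i : Fin n) => Xseq i ω) :=
    measurable_pi_lambda _ fun i => hXmeas i
  have hm : MeasurableSpace.comap (fun ω (i : Fin n) => Xseq i ω) inferInstance ≤ _ :=
    measurable_iff_comap_le.mp hpstm
  haveI : SigmaFinite (P.trim hm) := by
    haveI := isFiniteMeasure_trim (μ := P) hm
    infer_instance
  have hden : ∀ ω : Ω, (0:ℝ) < θ + ∑ i ∈ range n, f (Xseq i ω) := fun ω =>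
    add_pos_of_pos_of_nonneg hθ (Finset.sum_nonneg fun i _ => (hf _).le)
  have hGω : ∀ ω : Ω,
      ∑ x ∈ A, ((θ * ν x + ∑ i ∈ range n, R (Xseq i ω) x) /
          (θ + ∑ i ∈ range n, f (Xseq i ω)))
        = G (fun i : Fin n => Xseq i ω) := by
    intro ω
    rw [← Finset.sum_div]
    have h1 : ∑ x ∈ A, (θ * ν x + ∑ i ∈ range n, R (Xseq i ω) x)
        = G (fun i : Fin n => Xseq i ω) * (θ + ∑ i ∈ range n, f (Xseq i ω)) := by
      have h := hG (fun i : Fin n => Xseq i ω)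
      simpa [← Fin.sum_univ_eq_sum_range] using h
    rw [h1, mul_div_assoc, div_self (hden ω).ne', mul_one]
  have hsplit : ∀ y : X, (if y ∈ A then (1:ℝ) else 0)
      = ∑ x ∈ A, Set.indicator {x} (fun _ => (1:ℝ)) y := by
    intro y
    simp [Set.indicator_apply, Finset.sum_ite_eq]
  refine (ae_eq_condExp_of_forall_setIntegral_eq hm
    (aux_integrable P (hXmeas n) (fun x => if x ∈ A then (1:ℝ) else 0))
    (fun s _ _ => (aux_integrable P hpstm G).integrableOn)
    ?_ ?_).symm
  · -- set integral equality
    rintro s ⟨S, -, rfl⟩ -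
    have hS : MeasurableSet S := S.toFinite.measurableSet
    have hsamb : MeasurableSet ((fun ω (i : Fin n) => Xseq i ω) ⁻¹' S) := hpstm hS
    have indeq : ∀ F : Ω → ℝ,
        ∫ ω in (fun ω (i : Fin n) => Xseq i ω) ⁻¹' S, F ω ∂P
          = ∫ ω, F ω * Set.indicator S (fun _ => (1:ℝ)) (fun i : Fin n => Xseq i ω) ∂P := by
      intro F
      rw [← integral_indicator hsamb]
      congr 1
      funext ω
      by_cases h : (fun i : Fin n => Xseq i ω) ∈ S
      · rw [Set.indicator_of_mem (show ω ∈ _ from h) F, Set.indicator_of_mem h, mul_one]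
      · rw [Set.indicator_of_notMem (show ω ∉ _ from h) F, Set.indicator_of_notMem h, mul_zero]
    rw [indeq, indeq]
    have hintx : ∀ x : X, Integrable (fun ω =>
        ((θ * ν x + ∑ i ∈ range n, R (Xseq i ω) x) / (θ + ∑ i ∈ range n, f (Xseq i ω))) *
          Set.indicator S (fun _ => (1:ℝ)) (fun i : Fin n => Xseq i ω)) P := by
      intro x
      have hfun : (fun ω =>
          ((θ * ν x + ∑ i ∈ range n, R (Xseq i ω) x) / (θ + ∑ i ∈ range n, f (Xseq i ω))) *
            Set.indicator S (fun _ => (1:ℝ)) (fun i : Fin n => Xseq i ω))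
          = fun ω => (fun p : Fin n → X =>
              ((θ * ν x + ∑ i : Fin n, R (p i) x) / (θ + ∑ i : Fin n, f (p i))) *
                Set.indicator S (fun _ => (1:ℝ)) p) (fun i : Fin n => Xseq i ω) := by
        funext ω
        dsimp only
        rw [Fin.sum_univ_eq_sum_range (fun k => R (Xseq k ω) x) n,
          Fin.sum_univ_eq_sum_range (fun k => f (Xseq k ω)) n]
      rw [hfun]
      exact aux_integrable P hpstm (fun p : Fin n → X =>
        ((θ * ν x + ∑ i : Fin n, R (p i) x) / (θ + ∑ i : Fin n, f (p i))) *
          Set.indicator S (fun _ => (1:ℝ)) p)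
    symm
    calc ∫ ω, (if Xseq n ω ∈ A then (1:ℝ) else 0) *
            Set.indicator S (fun _ => (1:ℝ)) (fun i : Fin n => Xseq i ω) ∂P
        = ∫ ω, ∑ x ∈ A, Set.indicator {x} (fun _ => (1:ℝ)) (Xseq n ω) *
            Set.indicator S (fun _ => (1:ℝ)) (fun i : Fin n => Xseq i ω) ∂P := by
          congr 1
          funext ω
          rw [hsplit (Xseq n ω), Finset.sum_mul]
      _ = ∑ x ∈ A, ∫ ω, Set.indicator {x} (fun _ => (1:ℝ)) (Xseq n ω) *
            Set.indicator S (fun _ => (1:ℝ)) (fun i : Fin n => Xseq i ω) ∂P := by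
          refine integral_finset_sum _ fun x _ => ?_
          exact aux_integrable P ((hXmeas n).prodMk hpstm)
            (fun q : X × (Fin n → X) => Set.indicator {x} (fun _ => (1:ℝ)) q.1 *
              Set.indicator S (fun _ => (1:ℝ)) q.2)
      _ = ∑ x ∈ A, ∫ ω, ((θ * ν x + ∑ i ∈ range n, R (Xseq i ω) x) /
              (θ + ∑ i ∈ range n, f (Xseq i ω))) *
            Set.indicator S (fun _ => (1:ℝ)) (fun i : Fin n => Xseq i ω) ∂P :=
          Finset.sum_congr rfl fun x _ => hpred x S hS
      _ = ∫ ω, (∑ x ∈ A, ((θ * ν x + ∑ i ∈ range n, R (Xseq i ω) x) /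
              (θ + ∑ i ∈ range n, f (Xseq i ω)))) *
            Set.indicator S (fun _ => (1:ℝ)) (fun i : Fin n => Xseq i ω) ∂P := by
          rw [← integral_finset_sum _ fun x _ => hintx x]
          congr 1
          funext ω
          rw [Finset.sum_mul]
      _ = ∫ ω, G (fun i : Fin n => Xseq i ω) *
            Set.indicator S (fun _ => (1:ℝ)) (fun i : Fin n => Xseq i ω) ∂P := by
          congr 1
          funext ω
          rw [hGω ω]
  · -- strong measurability
    have hmeas : Measurable[MeasurableSpace.comap (fun ω (i : Fin n) => Xseq i ω) inferInstance]
        (fun ω => G (fun i : Fin n => Xseq i ω)) := by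
      exact (measurable_of_countable G).comp (measurable_iff_comap_le.mpr le_rfl)
    exact hmeas.stronglyMeasurable.aestronglyMeasurable
/-- For the MVPS on a finite set with block-diagonal reinforcement
`R_x = f(x) ν(·|B_j)` for `x ∈ B_j` (blocks given as fibers of `b`), where the law of `f`
is the same within each block as unconditionally, the conditional law of `f(X_{n+1})`
given the past equals the `ν`-law of `f`, and `f(X_{n+1})` is conditionally independent
of the events `{X_{n+1} ∈ B_j}` given the past. -/
theorem block_mvps_f_conditional_law_and_independence
    {Ω X : Type*} [MeasurableSpace Ω] [Fintype X] [DecidableEq X]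
    [MeasurableSpace X] [MeasurableSingletonClass X]
    (P : Measure Ω) [IsProbabilityMeasure P]
    (ν : X → ℝ) (hνpos : ∀ x, 0 < ν x) (hνsum : ∑ x, ν x = 1)
    {m : ℕ} (b : X → Fin m) (f : X → ℝ) (hf : ∀ x, 0 < f x)
    (θ : ℝ) (hθ : 0 < θ)
    (R : X → X → ℝ)
    (hR : ∀ x y, R x y =
      if b y = b x then f x * ν y / (∑ z ∈ univ.filter (fun z => b z = b x), ν z) else 0)
    -- the conditional law of f within each block equals its unconditional law
    (hfcond : ∀ (j : Fin m) (a : ℝ),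
      (∑ x ∈ univ.filter (fun x => b x = j ∧ f x = a), ν x) /
          (∑ x ∈ univ.filter (fun x => b x = j), ν x)
        = ∑ x ∈ univ.filter (fun x => f x = a), ν x)
    (Xseq : ℕ → Ω → X) (hXmeas : ∀ n, Measurable (Xseq n))
    -- X₁ ∼ ν
    (hinit : ∀ x : X, (P {ω | Xseq 0 ω = x}).toReal = ν x)
    -- predictive distributions of the MVPS(θ, ν, R), in integrated (test-set) form
    (hpred : ∀ n : ℕ, ∀ x : X, ∀ S : Set (Fin n → X), MeasurableSet S →
      ∫ ω, Set.indicator {x} (fun _ => (1 : ℝ)) (Xseq n ω) *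
          Set.indicator S (fun _ => (1 : ℝ)) (fun i : Fin n => Xseq i ω) ∂P
        = ∫ ω, ((θ * ν x + ∑ i ∈ range n, R (Xseq i ω) x) /
              (θ + ∑ i ∈ range n, f (Xseq i ω))) *
            Set.indicator S (fun _ => (1 : ℝ)) (fun i : Fin n => Xseq i ω) ∂P) :
    ∀ n : ℕ, ∀ a : ℝ,
      -- conditional law of f(X_{n+1}) given (X₁,…,Xₙ) is the ν-law of f
      ((P[(fun ω => if f (Xseq n ω) = a then (1 : ℝ) else 0) |
          MeasurableSpace.comap (fun ω (i : Fin n) => Xseq i ω) inferInstance])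
        =ᵐ[P] fun _ => ∑ x ∈ univ.filter (fun x => f x = a), ν x) ∧
      -- conditional independence of f(X_{n+1}) and {X_{n+1} ∈ B_j} given (X₁,…,Xₙ)
      (∀ j : Fin m,
        (P[(fun ω => if f (Xseq n ω) = a ∧ b (Xseq n ω) = j then (1 : ℝ) else 0) |
            MeasurableSpace.comap (fun ω (i : Fin n) => Xseq i ω) inferInstance])
          =ᵐ[P] fun ω => (∑ x ∈ univ.filter (fun x => f x = a), ν x) *
            (P[(fun ω' => if b (Xseq n ω') = j then (1 : ℝ) else 0) |
              MeasurableSpace.comap (fun ω' (i : Fin n) => Xseq i ω') inferInstance]) ω) := by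
  intro n a
  have hdenp : ∀ p : Fin n → X, (0:ℝ) < θ + ∑ i : Fin n, f (p i) := fun p =>
    add_pos_of_pos_of_nonneg hθ (Finset.sum_nonneg fun i _ => (hf _).le)
  -- sum of R z x over the set {f = a}
  have hRsum1 : ∀ z : X, ∑ x ∈ univ.filter (fun x => f x = a), R z x
      = f z * ∑ x ∈ univ.filter (fun x => f x = a), ν x := by
    intro z
    have hzpos : 0 < ∑ x ∈ univ.filter (fun x => b x = b z), ν x :=
      Finset.sum_pos (fun x _ => hνpos x) ⟨z, by simp⟩
    have hnum : ∑ x ∈ univ.filter (fun x => b x = b z ∧ f x = a), ν x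
        = (∑ x ∈ univ.filter (fun x => f x = a), ν x) *
          (∑ x ∈ univ.filter (fun x => b x = b z), ν x) := by
      have h := hfcond (b z) a
      rw [div_eq_iff hzpos.ne'] at h
      exact h
    calc ∑ x ∈ univ.filter (fun x => f x = a), R z x
        = ∑ x ∈ univ.filter (fun x => b x = b z ∧ f x = a),
            f z * ν x / (∑ w ∈ univ.filter (fun w => b w = b z), ν w) := by
          rw [Finset.sum_filter, Finset.sum_filter]
          refine Finset.sum_congr rfl fun x _ => ?_
          rw [hR z x]
          by_cases h1 : f x = a <;> by_cases h2 : b x = b z <;> simp [h1, h2]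
      _ = f z * ∑ x ∈ univ.filter (fun x => f x = a), ν x := by
          rw [← Finset.sum_div, ← Finset.mul_sum, hnum, mul_div_assoc,
            mul_div_cancel_right₀ _ hzpos.ne']
  have hkey1 : ∀ p : Fin n → X,
      ∑ x ∈ univ.filter (fun x => f x = a), (θ * ν x + ∑ i : Fin n, R (p i) x)
        = (∑ x ∈ univ.filter (fun x => f x = a), ν x) * (θ + ∑ i : Fin n, f (p i)) := by
    intro p
    rw [Finset.sum_add_distrib, ← Finset.mul_sum, Finset.sum_comm]
    rw [Finset.sum_congr rfl fun i (_ : i ∈ (univ : Finset (Fin n))) => hRsum1 (p i)]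
    rw [← Finset.sum_mul]
    ring
  constructor
  · have h1 := key_condexp P ν f θ hθ hf R Xseq hXmeas n (hpred n)
      (univ.filter (fun x => f x = a))
      (fun _ => ∑ x ∈ univ.filter (fun x => f x = a), ν x) hkey1
    have hfeq : (fun ω => if f (Xseq n ω) = a then (1:ℝ) else 0)
        = fun ω => if Xseq n ω ∈ univ.filter (fun x => f x = a) then (1:ℝ) else 0 := by
      funext ω; simp
    rw [hfeq]
    exact h1
  · intro j
    -- block mass identity, valid also for empty blocks
    have hnumj : ∑ x ∈ univ.filter (fun x => b x = j ∧ f x = a), ν x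
        = (∑ x ∈ univ.filter (fun x => f x = a), ν x) *
          (∑ x ∈ univ.filter (fun x => b x = j), ν x) := by
      by_cases h0 : (∑ x ∈ univ.filter (fun x => b x = j), ν x) = 0
      · have hempty : univ.filter (fun x : X => b x = j) = ∅ := by
          by_contra hne
          obtain ⟨z, hz⟩ := Finset.nonempty_iff_ne_empty.mpr hne
          exact absurd h0 (Finset.sum_pos (fun x _ => hνpos x) ⟨z, hz⟩).ne'
        have hsub : univ.filter (fun x : X => b x = j ∧ f x = a)
            ⊆ univ.filter (fun x : X => b x = j) := by
          intro x hx
          simp only [Finset.mem_filter] at hx ⊢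
          exact ⟨hx.1, hx.2.1⟩
        rw [hempty] at hsub
        rw [Finset.subset_empty.mp hsub, h0, Finset.sum_empty, mul_zero]
      · have h := hfcond j a
        rw [div_eq_iff h0] at h
        exact h
    have hRsumj : ∀ z : X, ∑ x ∈ univ.filter (fun x => b x = j), R z x
        = if b z = j then f z else 0 := by
      intro z
      by_cases hz : b z = j
      · rw [if_pos hz]
        have hpos : 0 < ∑ x ∈ univ.filter (fun x => b x = j), ν x :=
          Finset.sum_pos (fun x _ => hνpos x) ⟨z, by simp [hz]⟩
        calc ∑ x ∈ univ.filter (fun x => b x = j), R z x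
            = ∑ x ∈ univ.filter (fun x => b x = j),
                f z * ν x / (∑ w ∈ univ.filter (fun w => b w = j), ν w) := by
              refine Finset.sum_congr rfl fun x hx => ?_
              rw [hR z x, hz, if_pos (by simpa using hx)]
          _ = f z := by
              rw [← Finset.sum_div, ← Finset.mul_sum, mul_div_assoc, div_self hpos.ne',
                mul_one]
      · rw [if_neg hz]
        refine Finset.sum_eq_zero fun x hx => ?_
        simp only [Finset.mem_filter] at hx
        rw [hR z x, if_neg]
        rw [hx.2]
        exact fun h => hz h.symm
    have hRsum2 : ∀ z : X, ∑ x ∈ univ.filter (fun x => f x = a ∧ b x = j), R z x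
        = if b z = j then f z * (∑ x ∈ univ.filter (fun x => f x = a), ν x) else 0 := by
      intro z
      by_cases hz : b z = j
      · rw [if_pos hz]
        have hpos : 0 < ∑ x ∈ univ.filter (fun x => b x = j), ν x :=
          Finset.sum_pos (fun x _ => hνpos x) ⟨z, by simp [hz]⟩
        calc ∑ x ∈ univ.filter (fun x => f x = a ∧ b x = j), R z x
            = ∑ x ∈ univ.filter (fun x => b x = j ∧ f x = a),
                f z * ν x / (∑ w ∈ univ.filter (fun w => b w = j), ν w) := by
              rw [Finset.sum_filter, Finset.sum_filter]
              refine Finset.sum_congr rfl fun x _ => ?_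
              rw [hR z x, hz]
              by_cases h1 : f x = a <;> by_cases h2 : b x = j <;> simp [h1, h2]
          _ = f z * (∑ x ∈ univ.filter (fun x => f x = a), ν x) := by
              rw [← Finset.sum_div, ← Finset.mul_sum, hnumj, mul_div_assoc,
                mul_div_cancel_right₀ _ hpos.ne']
      · rw [if_neg hz]
        refine Finset.sum_eq_zero fun x hx => ?_
        simp only [Finset.mem_filter] at hx
        rw [hR z x, if_neg]
        rw [hx.2.2]
        exact fun h => hz h.symm
    have hkeyj : ∀ p : Fin n → X,
        ∑ x ∈ univ.filter (fun x => b x = j), (θ * ν x + ∑ i : Fin n, R (p i) x)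
          = ((θ * (∑ x ∈ univ.filter (fun x => b x = j), ν x) +
              ∑ i : Fin n, (if b (p i) = j then f (p i) else 0)) /
              (θ + ∑ i : Fin n, f (p i))) * (θ + ∑ i : Fin n, f (p i)) := by
      intro p
      rw [div_mul_cancel₀ _ (hdenp p).ne']
      rw [Finset.sum_add_distrib, ← Finset.mul_sum, Finset.sum_comm]
      congr 1
      exact Finset.sum_congr rfl fun i _ => hRsumj (p i)
    have hkey2 : ∀ p : Fin n → X,
        ∑ x ∈ univ.filter (fun x => f x = a ∧ b x = j), (θ * ν x + ∑ i : Fin n, R (p i) x)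
          = ((∑ x ∈ univ.filter (fun x => f x = a), ν x) *
              ((θ * (∑ x ∈ univ.filter (fun x => b x = j), ν x) +
                ∑ i : Fin n, (if b (p i) = j then f (p i) else 0)) /
                (θ + ∑ i : Fin n, f (p i)))) * (θ + ∑ i : Fin n, f (p i)) := by
      intro p
      rw [mul_assoc, div_mul_cancel₀ _ (hdenp p).ne']
      rw [Finset.sum_add_distrib, ← Finset.mul_sum, Finset.sum_comm]
      have h1 : ∑ x ∈ univ.filter (fun x => f x = a ∧ b x = j), ν x
          = (∑ x ∈ univ.filter (fun x => f x = a), ν x) *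
            (∑ x ∈ univ.filter (fun x => b x = j), ν x) := by
        rw [show univ.filter (fun x : X => f x = a ∧ b x = j)
            = univ.filter (fun x : X => b x = j ∧ f x = a) from by
          ext x; simp [and_comm]]
        exact hnumj
      rw [h1]
      rw [Finset.sum_congr rfl fun i (_ : i ∈ (univ : Finset (Fin n))) => hRsum2 (p i)]
      have h2 : ∑ i : Fin n, (if b (p i) = j
            then f (p i) * (∑ x ∈ univ.filter (fun x => f x = a), ν x) else 0)
          = (∑ x ∈ univ.filter (fun x => f x = a), ν x) *
            ∑ i : Fin n, (if b (p i) = j then f (p i) else 0) := by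
        rw [Finset.mul_sum]
        refine Finset.sum_congr rfl fun i _ => ?_
        by_cases h : b (p i) = j <;> simp [h] <;> ring
      rw [h2]
      ring
    have h2 := key_condexp P ν f θ hθ hf R Xseq hXmeas n (hpred n)
      (univ.filter (fun x => f x = a ∧ b x = j))
      (fun p => (∑ x ∈ univ.filter (fun x => f x = a), ν x) *
        ((θ * (∑ x ∈ univ.filter (fun x => b x = j), ν x) +
          ∑ i : Fin n, (if b (p i) = j then f (p i) else 0)) /
          (θ + ∑ i : Fin n, f (p i)))) hkey2
    have hj := key_condexp P ν f θ hθ hf R Xseq hXmeas n (hpred n)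
      (univ.filter (fun x => b x = j))
      (fun p => (θ * (∑ x ∈ univ.filter (fun x => b x = j), ν x) +
        ∑ i : Fin n, (if b (p i) = j then f (p i) else 0)) /
        (θ + ∑ i : Fin n, f (p i))) hkeyj
    have heq2 : (fun ω => if f (Xseq n ω) = a ∧ b (Xseq n ω) = j then (1:ℝ) else 0)
        = fun ω => if Xseq n ω ∈ univ.filter (fun x => f x = a ∧ b x = j) then (1:ℝ) else 0 := by
      funext ω; simp
    have heqj : (fun ω' => if b (Xseq n ω') = j then (1:ℝ) else 0)
        = fun ω' => if Xseq n ω' ∈ univ.filter (fun x => b x = j) then (1:ℝ) else 0 := by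
      funext ω; simp
    rw [heq2, heqj]
    refine h2.trans ?_
    refine hj.mono fun ω h => ?_
    dsimp only
    rw [h]
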